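/- The only finite subsets of a free group satisfying the system of congruences A₁ ≅ A₃, A₁ ∪ A₂ ≅ A₁ ∪ A₃ are those for which some single group element σ satisfies σ • A₃ = A₁ and σ • A₁ = A₂. Precisely: if A₁, A₂, A₃ are pairwise disjoint finite subsets of a free group F and ρ, σ ∈ F satisfy ρ • A₁ = A₃ and σ • (A₁ ∪ A₃) = A₁ ∪ A₂, then σ • A₃ = A₁ and σ • A₁ = A₂. -/

import Mathlib

open Pointwise

private lemma freeGroup_commute_of_subsingleton {ι : Type*} (hι : Subsingleton ι)
    (x y : FreeGroup ι) : Commute x y := by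
  induction x using FreeGroup.induction_on with
  | C1 => exact Commute.one_left y
  | of a =>
    induction y using FreeGroup.induction_on with
    | C1 => exact Commute.one_right _
    | of b => obtain rfl := hι.elim a b; exact Commute.refl _
    | inv_of b hb => exact hb.inv_right
    | mul u v hu hv => exact hu.mul_right hv
  | inv_of a ha => exact ha.inv_left
  | mul u v hu hv => exact hu.mul_left hv

private lemma mem_closure_pair_rep {M : Type*} [CommGroup M] {x y v : M}
    (h : v ∈ Subgroup.closure ({x, y} : Set M)) : ∃ m n : ℤ, x ^ m * y ^ n = v := by
  induction h using Subgroup.closure_induction with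
  | mem z hz =>
    rcases hz with rfl | rfl
    · exact ⟨1, 0, by simp⟩
    · exact ⟨0, 1, by simp⟩
  | one => exact ⟨0, 0, by simp⟩
  | mul a b _ _ ha hb =>
    obtain ⟨m₁, n₁, rfl⟩ := ha
    obtain ⟨m₂, n₂, rfl⟩ := hb
    exact ⟨m₁ + m₂, n₁ + n₂, by rw [zpow_add, zpow_add]; exact mul_mul_mul_comm _ _ _ _⟩
  | inv a _ ha =>
    obtain ⟨m, n, rfl⟩ := ha
    exact ⟨-m, -n, by rw [zpow_neg, zpow_neg, mul_inv]⟩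

private lemma sum_two_letters {M : Type*} [AddCommGroup M] (s r : M) :
    ∀ L : List M, (∀ x ∈ L, x = s ∨ x = s + r) →
      ∃ b : ℕ, L.sum = (L.length : ℤ) • s + (b : ℤ) • r := by
  intro L
  induction L with
  | nil => intro _; exact ⟨0, by simp⟩
  | cons x t ih =>
    intro h
    obtain ⟨b, hb⟩ := ih fun y hy => h y (List.mem_cons_of_mem _ hy)
    rcases h x (List.mem_cons_self (a := x) (l := t)) with rfl | rfl
    · refine ⟨b, ?_⟩
      rw [List.sum_cons, hb, List.length_cons]
      push_cast
      rw [add_smul]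
      abel
    · refine ⟨b + 1, ?_⟩
      rw [List.sum_cons, hb, List.length_cons]
      push_cast
      rw [add_smul, add_smul]
      abel

/-- If a nonempty product of factors, each equal to `σ` or `σ * ρ`, is trivial in a
free group, then `ρ` and `σ` commute. -/
private lemma commute_of_rel {α : Type*} (ρ σ : FreeGroup α) (l : List (FreeGroup α))
    (hne : l ≠ []) (hmem : ∀ g ∈ l, g = σ ∨ g = σ * ρ) (hprod : l.prod = 1) :
    ρ * σ = σ * ρ := by
  classical
  set H : Subgroup (FreeGroup α) := Subgroup.closure {σ, ρ} with hH
  have hσH : σ ∈ H := Subgroup.subset_closure (by simp)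
  have hρH : ρ ∈ H := Subgroup.subset_closure (by simp)
  set σ' : H := ⟨σ, hσH⟩ with hσ'
  set ρ' : H := ⟨ρ, hρH⟩ with hρ'
  -- the two elements generate H
  have htop : Subgroup.closure ({σ', ρ'} : Set H) = ⊤ := by
    rw [eq_top_iff, ← Subgroup.closure_closure_coe_preimage (k := ({σ, ρ} : Set (FreeGroup α)))]
    apply Subgroup.closure_mono
    rintro z hz
    rcases hz with h | h
    · exact Or.inl (Subtype.ext h)
    · exact Or.inr (Subtype.ext h)
  set ι := IsFreeGroup.Generators H with hι
  set e : H ≃* FreeGroup ι := IsFreeGroup.toFreeGroup H with he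
  set φ : FreeGroup ι →* Multiplicative (ι →₀ ℤ) :=
    FreeGroup.lift fun i => Multiplicative.ofAdd (Finsupp.single i 1) with hφ
  have hφsurj : Function.Surjective φ := by
    intro v
    obtain ⟨w, hw⟩ : ∃ g, φ g = Multiplicative.ofAdd v.toAdd := by
      induction v.toAdd using Finsupp.induction_linear with
      | zero => exact ⟨1, by simp⟩
      | add f g hf hg =>
        obtain ⟨gf, hgf⟩ := hf
        obtain ⟨gg, hgg⟩ := hg
        exact ⟨gf * gg, by rw [map_mul, hgf, hgg, ← ofAdd_add]⟩
      | single a b =>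
        refine ⟨FreeGroup.of a ^ b, ?_⟩
        rw [map_zpow]
        simp only [hφ, FreeGroup.lift_apply_of]
        rw [← ofAdd_zsmul, Finsupp.smul_single, smul_eq_mul, mul_one]
    exact ⟨w, hw⟩
  set μ : H →* Multiplicative (ι →₀ ℤ) := φ.comp e.toMonoidHom with hμ
  have hμsurj : Function.Surjective μ := hφsurj.comp e.surjective
  -- images of the two elements generate the abelianization
  have habtop : Subgroup.closure ({μ σ', μ ρ'} : Set (Multiplicative (ι →₀ ℤ))) = ⊤ := by
    have h1 : (Subgroup.closure ({σ', ρ'} : Set H)).map μ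
        = Subgroup.closure (μ '' {σ', ρ'}) := MonoidHom.map_closure μ _
    rw [htop, Subgroup.map_top_of_surjective μ hμsurj, Set.image_pair] at h1
    exact h1.symm
  set s₀ : ι →₀ ℤ := (μ σ').toAdd with hs₀
  set r₀ : ι →₀ ℤ := (μ ρ').toAdd with hr₀
  -- the relation in the abelianization
  set l' : List H := l.map fun g => if g = σ then σ' else σ' * ρ' with hl'
  have hl'mem : ∀ h ∈ l', h = σ' ∨ h = σ' * ρ' := by
    intro h hh
    rcases List.mem_map.mp hh with ⟨g, _, rfl⟩
    by_cases hg : g = σ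
    · simp [hg]
    · simp [hg]
  have hl'prod : l'.prod = 1 := by
    apply Subtype.ext
    have : ((l'.prod : H) : FreeGroup α) = (l'.map (H.subtype)).prod :=
      (map_list_prod H.subtype l').symm ▸ rfl
    rw [Subgroup.coe_one]
    calc ((l'.prod : H) : FreeGroup α) = (l'.map (H.subtype)).prod := by
          rw [← map_list_prod]; rfl
      _ = l.prod := by
          rw [hl', List.map_map]
          congr 1
          conv_rhs => rw [← List.map_id l]
          apply List.map_congr_left
          intro g hg
          simp only [Function.comp_apply, id_eq]
          by_cases hcase : g = σ
          · rw [if_pos hcase, hcase]; rfl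
          · have hgval : g = σ * ρ := (hmem g hg).resolve_left hcase
            rw [if_neg hcase, hgval]; rfl
      _ = 1 := hprod
  have hrel : ∃ b : ℕ, 0 = (l.length : ℤ) • s₀ + (b : ℤ) • r₀ := by
    have h1 : (l'.map μ).prod = 1 := by rw [← map_list_prod, hl'prod, map_one]
    have h2 : ((l'.map μ).map Multiplicative.toAdd).sum = 0 := by
      rw [← toAdd_list_sum, h1]; rfl
    obtain ⟨b, hb⟩ := sum_two_letters s₀ r₀ ((l'.map μ).map Multiplicative.toAdd) (by
      intro x hx
      simp only [List.mem_map] at hx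
      obtain ⟨_, ⟨h, hh, rfl⟩, rfl⟩ := hx
      rcases hl'mem h hh with rfl | rfl
      · exact Or.inl rfl
      · right
        rw [map_mul, toAdd_mul])
    refine ⟨b, ?_⟩
    have hlen : ((l'.map μ).map Multiplicative.toAdd).length = l.length := by
      simp [hl']
    rw [← hlen, ← hb]
    exact h2.symm
  obtain ⟨b, hb⟩ := hrel
  -- deduce that ι is a subsingleton
  have hsub : Subsingleton ι := by
    constructor
    intro i j
    by_contra hij
    obtain ⟨m₁, n₁, hm₁⟩ := mem_closure_pair_rep
      (x := μ σ') (y := μ ρ') (v := Multiplicative.ofAdd (Finsupp.single i 1))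
      (by rw [habtop]; trivial)
    obtain ⟨m₂, n₂, hm₂⟩ := mem_closure_pair_rep
      (x := μ σ') (y := μ ρ') (v := Multiplicative.ofAdd (Finsupp.single j 1))
      (by rw [habtop]; trivial)
    have hm₁' : m₁ • s₀ + n₁ • r₀ = Finsupp.single i 1 := by
      have := congrArg Multiplicative.toAdd hm₁
      rwa [toAdd_mul, toAdd_zpow, toAdd_zpow, toAdd_ofAdd] at this
    have hm₂' : m₂ • s₀ + n₂ • r₀ = Finsupp.single j 1 := by
      have := congrArg Multiplicative.toAdd hm₂
      rwa [toAdd_mul, toAdd_zpow, toAdd_zpow, toAdd_ofAdd] at this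
    set p := s₀ i with hp
    set q := s₀ j with hq
    set u := r₀ i with hu
    set v := r₀ j with hv
    have E1 : m₁ * p + n₁ * u = 1 := by
      have := DFunLike.congr_fun hm₁' i
      simpa [Finsupp.single_apply] using this
    have hji : ¬ j = i := fun h => hij h.symm
    have E2 : m₁ * q + n₁ * v = 0 := by
      have := DFunLike.congr_fun hm₁' j
      simpa [Finsupp.single_apply, hij] using this
    have E3 : m₂ * p + n₂ * u = 0 := by
      have := DFunLike.congr_fun hm₂' i
      simpa [Finsupp.single_apply, hji] using this
    have E4 : m₂ * q + n₂ * v = 1 := by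
      have := DFunLike.congr_fun hm₂' j
      simpa [Finsupp.single_apply] using this
    have R1 : (l.length : ℤ) * p + (b : ℤ) * u = 0 := by
      have := DFunLike.congr_fun hb i
      simpa using this.symm
    have R2 : (l.length : ℤ) * q + (b : ℤ) * v = 0 := by
      have := DFunLike.congr_fun hb j
      simpa using this.symm
    have hlenpos : (0 : ℤ) < l.length := by
      exact_mod_cast List.length_pos_iff.mpr hne
    have key : p * v - q * u = 0 := by
      have h0 : (l.length : ℤ) * (p * v - q * u) = 0 := by linear_combination v * R1 - u * R2
      rcases mul_eq_zero.mp h0 with h | h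
      · exact absurd h hlenpos.ne'
      · exact h
    have h0 : (0 : ℤ) = m₂ * q + n₂ * v := by
      linear_combination (m₂ * q + n₂ * v) * E1 - (m₂ * p + n₂ * u) * E2
        - (m₁ * n₂ - n₁ * m₂) * key
    rw [E4] at h0
    exact one_ne_zero h0.symm
  -- conclude commutativity
  have hc : Commute (e ρ') (e σ') := freeGroup_commute_of_subsingleton hsub _ _
  have hc' : ρ' * σ' = σ' * ρ' := by
    have := congrArg e.symm hc
    rwa [← map_mul, ← map_mul, e.symm_apply_apply, e.symm_apply_apply] at this
  exact congrArg Subtype.val hc'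

/-- In a free group, disjoint finite sets with `ρ • A₁ = A₃` and
`σ • (A₁ ∪ A₃) = A₁ ∪ A₂` satisfy `σ • A₃ = A₁` and `σ • A₁ = A₂`. -/
theorem stmt9 {α : Type*} (ρ σ : FreeGroup α)
    (A₁ A₂ A₃ : Set (FreeGroup α)) (h1 : A₁.Finite) (h2 : A₂.Finite) (h3 : A₃.Finite)
    (d12 : Disjoint A₁ A₂) (d13 : Disjoint A₁ A₃) (d23 : Disjoint A₂ A₃)
    (hρ : ρ • A₁ = A₃) (hσ : σ • (A₁ ∪ A₃) = A₁ ∪ A₂) :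
    σ • A₃ = A₁ ∧ σ • A₁ = A₂ := by
  classical
  rcases A₁.eq_empty_or_nonempty with hA | ⟨x₀, hx₀⟩
  · have h3e : A₃ = ∅ := by rw [← hρ, hA]; exact Set.smul_set_empty
    have h2e : A₂ = ∅ := by
      have := hσ
      rw [hA, h3e, Set.empty_union, Set.smul_set_empty, Set.empty_union] at this
      exact this.symm
    simp [hA, h2e, h3e]
  · -- construct the cycle giving a relation
    have step : ∀ p : A₁, ∃ (g : FreeGroup α) (q : A₁),
        (g = σ ∨ g = σ * ρ) ∧ (p : FreeGroup α) = g * q := by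
      rintro ⟨p, hp⟩
      have hp2 : p ∈ σ • (A₁ ∪ A₃) := (Set.ext_iff.mp hσ p).mpr (Or.inl hp)
      obtain ⟨y, hy, hyp⟩ := hp2
      rcases hy with hy1 | hy3
      · exact ⟨σ, ⟨y, hy1⟩, Or.inl rfl, by show p = σ * y; rw [← hyp]; rfl⟩
      · obtain ⟨z, hz, hzy⟩ := (Set.ext_iff.mp hρ y).mpr hy3
        refine ⟨σ * ρ, ⟨z, hz⟩, Or.inr rfl, ?_⟩
        show p = σ * ρ * z
        rw [← hyp, ← hzy]
        simp [mul_assoc, smul_eq_mul]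
    choose Lf Tf hLf hTf using step
    haveI : Finite ↥A₁ := h1.to_subtype
    have hcomm : ρ * σ = σ * ρ := by
      have expand : ∀ (m : ℕ) (p : ↥A₁), (p : FreeGroup α) =
          ((List.range m).map fun t => Lf (Tf^[t] p)).prod * (Tf^[m] p : FreeGroup α) := by
        intro m
        induction m with
        | zero => intro p; simp
        | succ m ih =>
          intro p
          rw [List.range_succ_eq_map, List.map_cons, List.prod_cons, List.map_map]
          have hfun : ((fun t => Lf (Tf^[t] p)) ∘ Nat.succ) = fun t => Lf (Tf^[t] (Tf p)) := by
            funext t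
            simp [Function.iterate_succ_apply]
          rw [hfun, mul_assoc, Function.iterate_zero_apply, Function.iterate_succ_apply,
            ← ih (Tf p)]
          exact hTf p
      have key : ∀ i j : ℕ, i < j →
          Tf^[i] ⟨x₀, hx₀⟩ = Tf^[j] ⟨x₀, hx₀⟩ → ρ * σ = σ * ρ := by
        intro i j hlt heq
        set p : ↥A₁ := Tf^[i] ⟨x₀, hx₀⟩ with hpdef
        have hcyc : Tf^[j - i] p = p := by
          rw [hpdef, ← Function.iterate_add_apply, Nat.sub_add_cancel hlt.le, ← heq]
        set L : List (FreeGroup α) := (List.range (j - i)).map fun t => Lf (Tf^[t] p) with hL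
        have hLprod : L.prod = 1 := by
          have := expand (j - i) p
          rw [hcyc] at this
          exact (right_eq_mul.mp this)
        have hLne : L ≠ [] := by
          simp only [hL, ne_eq, List.map_eq_nil_iff, List.range_eq_nil]
          omega
        have hLmem : ∀ g ∈ L, g = σ ∨ g = σ * ρ := by
          intro g hg
          rcases List.mem_map.mp hg with ⟨t, _, rfl⟩
          exact hLf _
        exact commute_of_rel ρ σ L hLne hLmem hLprod
      obtain ⟨i, j, hij, heq⟩ :=
        Finite.exists_ne_map_eq_of_infinite fun k : ℕ => Tf^[k] (⟨x₀, hx₀⟩ : ↥A₁)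
      rcases hij.lt_or_gt with h | h
      · exact key i j h heq
      · exact key j i h heq.symm
    -- finish by disjointness and counting
    have hd : ∀ a ∈ A₁, σ * a ∉ A₁ := by
      intro a ha h'
      have h3a : ρ * a ∈ A₃ := by rw [← hρ]; exact ⟨a, ha, rfl⟩
      have h5 : σ * (ρ * a) ∈ A₁ ∪ A₂ := by
        rw [← hσ]; exact ⟨ρ * a, Or.inr h3a, rfl⟩
      have h6 : σ * (ρ * a) ∈ A₃ := by
        have : σ * (ρ * a) = ρ * (σ * a) := by
          rw [← mul_assoc, ← hcomm, mul_assoc]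
        rw [this, ← hρ]
        exact ⟨σ * a, h', rfl⟩
      rcases h5 with h5 | h5
      · exact Set.disjoint_left.mp d13 h5 h6
      · exact Set.disjoint_left.mp d23 h5 h6
    have hsub1 : σ • A₁ ⊆ A₂ := by
      rintro _ ⟨a, ha, rfl⟩
      have hmem : σ • a ∈ A₁ ∪ A₂ := by
        rw [← hσ]; exact ⟨a, Or.inl ha, rfl⟩
      rcases hmem with hmem | hmem
      · exact absurd hmem (hd a ha)
      · exact hmem
    have hsub2 : A₁ ⊆ σ • A₃ := by
      intro w hw
      have : w ∈ σ • (A₁ ∪ A₃) := by rw [hσ]; exact Or.inl hw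
      obtain ⟨y, hy, rfl⟩ := this
      rcases hy with hy | hy
      · exact absurd hw (hd y hy)
      · exact ⟨y, hy, rfl⟩
    have hcard : (σ • A₃).ncard ≤ A₁.ncard := by
      rw [Set.ncard_smul_set, ← hρ, Set.ncard_smul_set]
    have h31 : σ • A₃ = A₁ :=
      (Set.eq_of_subset_of_ncard_le hsub2 hcard (h3.smul_set)).symm
    refine ⟨h31, Set.Subset.antisymm hsub1 ?_⟩
    intro y hy2
    have : y ∈ σ • A₁ ∪ σ • A₃ := by
      rw [← Set.smul_set_union, hσ]
      exact Or.inr hy2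
    rcases this with h | h
    · exact h
    · rw [h31] at h
      exact absurd hy2 (Set.disjoint_left.mp d12 h)
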